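/- Every free group is residually nilpotent: the intersection of all terms of its lower central series is the trivial subgroup. -/

import Mathlib

namespace Magnus

variable {S : Type*}

/-- Noncommutative power series over ℤ with variables indexed by `S`,
represented as coefficient functions on words. -/
def A (S : Type*) := List S → ℤ

instance : AddCommGroup (A S) := Pi.addCommGroup

instance : One (A S) := ⟨fun w => match w with | [] => 1 | _ => 0⟩

instance : Mul (A S) :=
  ⟨fun f g w => ∑ i ∈ Finset.range (w.length + 1), f (w.take i) * g (w.drop i)⟩

lemma mul_apply (f g : A S) (w : List S) :
    (f * g) w = ∑ i ∈ Finset.range (w.length + 1), f (w.take i) * g (w.drop i) := rfl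

lemma one_apply_nil : (1 : A S) ([] : List S) = 1 := rfl
lemma one_apply_ne {w : List S} (h : w ≠ []) : (1 : A S) w = 0 := by
  cases w with
  | nil => exact absurd rfl h
  | cons a t => rfl

lemma add_apply (f g : A S) (w : List S) : (f + g) w = f w + g w := rfl
lemma sub_apply (f g : A S) (w : List S) : (f - g) w = f w - g w := rfl
lemma neg_apply (f : A S) (w : List S) : (-f) w = -(f w) := rfl
lemma zero_apply (w : List S) : (0 : A S) w = 0 := rfl

private lemma mul_assoc' (f g h : A S) : f * g * h = f * (g * h) := by
  funext w
  set n := w.length with hn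
  have L1 : ∀ j ∈ Finset.range (n + 1), (f * g) (w.take j) * h (w.drop j) =
      ∑ i ∈ Finset.range (j + 1),
        f (w.take i) * g ((w.drop i).take (j - i)) * h (w.drop j) := by
    intro j hj
    have hjn : j ≤ n := Nat.lt_succ_iff.mp (Finset.mem_range.mp hj)
    rw [mul_apply, Finset.sum_mul]
    have hlen : (w.take j).length = j := by simp [hn.symm ▸ hjn]
    rw [hlen]
    refine Finset.sum_congr rfl fun i hi => ?_
    have hij : i ≤ j := Nat.lt_succ_iff.mp (Finset.mem_range.mp hi)
    congr 2
    · rw [List.take_take, min_eq_left hij]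
    · rw [List.drop_take]
  have L2 : ∀ i ∈ Finset.range (n + 1), f (w.take i) * (g * h) (w.drop i) =
      ∑ k ∈ Finset.range (n + 1 - i),
        f (w.take i) * (g ((w.drop i).take k) * h ((w.drop i).drop k)) := by
    intro i hi
    have hin : i ≤ n := Nat.lt_succ_iff.mp (Finset.mem_range.mp hi)
    rw [mul_apply, Finset.mul_sum]
    have hlen : (w.drop i).length = n - i := by simp [← hn]
    rw [hlen]
    have : n - i + 1 = n + 1 - i := by omega
    rw [this]
  show (f * g * h) w = (f * (g * h)) w
  rw [mul_apply, mul_apply, ← hn, Finset.sum_congr rfl L1, Finset.sum_congr rfl L2]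
  have swap : ∑ j ∈ Finset.range (n + 1), ∑ i ∈ Finset.range (j + 1),
      f (w.take i) * g ((w.drop i).take (j - i)) * h (w.drop j)
      = ∑ i ∈ Finset.range (n + 1), ∑ j ∈ Finset.Ico i (n + 1),
        f (w.take i) * g ((w.drop i).take (j - i)) * h (w.drop j) := by
    simp only [Finset.range_eq_Ico]
    exact (Finset.sum_Ico_Ico_comm 0 (n + 1) _).symm
  rw [swap]
  refine Finset.sum_congr rfl fun i hi => ?_
  rw [Finset.sum_Ico_eq_sum_range]
  refine Finset.sum_congr rfl fun k hk => ?_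
  simp only [Nat.add_sub_cancel_left, List.drop_drop, mul_assoc]

instance : Ring (A S) :=
  { (inferInstance : AddCommGroup (A S)),
    (inferInstance : One (A S)),
    (inferInstance : Mul (A S)) with
    left_distrib := fun f g h => by
      funext w
      simp [mul_apply, add_apply, mul_add, Finset.sum_add_distrib]
    right_distrib := fun f g h => by
      funext w
      simp [mul_apply, add_apply, add_mul, Finset.sum_add_distrib]
    zero_mul := fun f => by funext w; simp [mul_apply, zero_apply]
    mul_zero := fun f => by funext w; simp [mul_apply, zero_apply]
    one_mul := fun f => by
      funext w
      rw [mul_apply, Finset.sum_eq_single 0]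
      · rw [List.take_zero, List.drop_zero, one_apply_nil, one_mul]
      · intro i hi hne
        have : w.take i ≠ [] := by
          rw [Ne, List.take_eq_nil_iff]
          have := Finset.mem_range.mp hi
          rintro (rfl | rfl)
          · exact hne rfl
          · simp at this; omega
        rw [one_apply_ne this, zero_mul]
      · intro hmem; exact absurd (Finset.mem_range.mpr (Nat.succ_pos _)) hmem
    mul_one := fun f => by
      funext w
      rw [mul_apply, Finset.sum_eq_single w.length]
      · rw [List.take_length, List.drop_length, one_apply_nil, mul_one]
      · intro i hi hne
        have h1 : i < w.length + 1 := Finset.mem_range.mp hi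
        have : w.drop i ≠ [] := by
          rw [Ne, List.drop_eq_nil_iff]
          omega
        rw [one_apply_ne this, mul_zero]
      · intro hmem
        exact absurd (Finset.mem_range.mpr (Nat.lt_succ_self _)) hmem
    mul_assoc := mul_assoc' }
/-- `f` has no nonzero coefficients in degrees `< n`. -/
def lowOrder (n : ℕ) (f : A S) : Prop := ∀ w : List S, w.length < n → f w = 0

lemma lowOrder_zero (f : A S) : lowOrder 0 f := fun _ h => absurd h (Nat.not_lt_zero _)

lemma lowOrder.mono {m n : ℕ} (h : m ≤ n) {f : A S} (hf : lowOrder n f) : lowOrder m f :=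
  fun w hw => hf w (lt_of_lt_of_le hw h)

lemma lowOrder.sub {n : ℕ} {f g : A S} (hf : lowOrder n f) (hg : lowOrder n g) :
    lowOrder n (f - g) := fun w hw => by rw [sub_apply, hf w hw, hg w hw, sub_zero]

lemma lowOrder.add {n : ℕ} {f g : A S} (hf : lowOrder n f) (hg : lowOrder n g) :
    lowOrder n (f + g) := fun w hw => by rw [add_apply, hf w hw, hg w hw, add_zero]

lemma lowOrder.neg {n : ℕ} {f : A S} (hf : lowOrder n f) : lowOrder n (-f) :=
  fun w hw => by rw [neg_apply, hf w hw, neg_zero]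

lemma lowOrder.mul {m n : ℕ} {f g : A S} (hf : lowOrder m f) (hg : lowOrder n g) :
    lowOrder (m + n) (f * g) := by
  intro w hw
  rw [mul_apply]
  refine Finset.sum_eq_zero fun i hi => ?_
  have hi' : i ≤ w.length := Nat.lt_succ_iff.mp (Finset.mem_range.mp hi)
  have hlen : (w.take i).length + (w.drop i).length = w.length := by simp; omega
  by_cases h : (w.take i).length < m
  · rw [hf _ h, zero_mul]
  · have : (w.drop i).length < n := by omega
    rw [hg _ this, mul_zero]

/-- The subgroup of units congruent to `1` modulo degree `n`. -/
def Gn (S : Type*) (n : ℕ) : Subgroup (A S)ˣ where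
  carrier := {u | lowOrder n ((u : A S) - 1)}
  one_mem' := by
    simp only [Set.mem_setOf_eq, Units.val_one, sub_self]
    intro w _
    rfl
  mul_mem' := by
    intro u v hu hv
    have key : ((u * v : (A S)ˣ) : A S) - 1 =
        (((u : A S) - 1) * ((v : A S) - 1)) + (((u : A S) - 1) + ((v : A S) - 1)) := by
      push_cast
      noncomm_ring
    rw [Set.mem_setOf_eq, key]
    exact ((hu.mul hv).mono (by omega)).add (hu.add hv)
  inv_mem' := by
    intro u hu
    have key : ((u⁻¹ : (A S)ˣ) : A S) - 1 = -(((u⁻¹ : (A S)ˣ) : A S) * ((u : A S) - 1)) := by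
      have h1 : ((u⁻¹ : (A S)ˣ) : A S) * (u : A S) = 1 := u.inv_mul
      rw [mul_sub, h1, mul_one, neg_sub]
    rw [Set.mem_setOf_eq, key]
    exact (((lowOrder_zero _).mul hu).neg).mono (le_of_eq (zero_add n).symm)
section Units

open Classical in
/-- The variable `X s`. -/
noncomputable def X (s : S) : A S := fun w => if w = [s] then 1 else 0

open Classical in
/-- The geometric series `1 - X s + X s ^ 2 - ...`, inverse of `1 + X s`. -/
noncomputable def geo (s : S) : A S :=
  fun w => if w = List.replicate w.length s then (-1 : ℤ) ^ w.length else 0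

lemma X_apply_self (s : S) : X s [s] = 1 := by simp [X]
lemma X_apply_ne (s : S) {w : List S} (h : w ≠ [s]) : X s w = 0 := by simp [X, h]
lemma X_apply_nil (s : S) : X s [] = 0 := X_apply_ne s (by simp)

lemma geo_apply_replicate (s : S) (n : ℕ) :
    geo s (List.replicate n s) = (-1 : ℤ) ^ n := by simp [geo]

lemma geo_apply_nil (s : S) : geo s [] = 1 := by simpa using geo_apply_replicate s 0

lemma geo_apply_ne (s : S) {w : List S} (h : w ≠ List.replicate w.length s) :
    geo s w = 0 := by simp [geo, h]

lemma cons_eq_replicate_iff {a s : S} {t : List S} :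
    a :: t = List.replicate (a :: t).length s ↔ a = s ∧ t = List.replicate t.length s := by
  simp [List.replicate_succ]

lemma concat_eq_replicate_iff {a s : S} {t : List S} :
    t ++ [a] = List.replicate (t ++ [a]).length s ↔ a = s ∧ t = List.replicate t.length s := by
  constructor
  · intro h
    have hlen : (t ++ [a]).length = t.length + 1 := by simp
    rw [hlen, List.replicate_succ'] at h
    have h2 := List.append_inj' h (by simp)
    refine ⟨by simpa using h2.2, h2.1⟩
  · rintro ⟨rfl, ht⟩
    have hlen : (t ++ [a]).length = t.length + 1 := by simp
    rw [hlen, List.replicate_succ']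
    rw [← ht]

lemma X_mul_apply_nil (s : S) (g : A S) : (X s * g) [] = 0 := by
  simp [mul_apply, X_apply_nil]

lemma X_mul_apply_cons (s a : S) (g : A S) (t : List S) :
    (X s * g) (a :: t) = X s [a] * g t := by
  rw [mul_apply, Finset.sum_eq_single 1]
  · simp
  · intro i hi hne
    have hi' : i ≤ t.length + 1 := by
      have := Finset.mem_range.mp hi
      simpa [List.length_cons] using Nat.lt_succ_iff.mp this
    have hlen : ((a :: t).take i).length = i := by
      rw [List.length_take]; simp [List.length_cons]; omega
    have : (a :: t).take i ≠ [s] := fun hcontra => by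
      rw [hcontra] at hlen; simp at hlen; exact hne hlen.symm
    rw [X_apply_ne s this, zero_mul]
  · intro hmem
    exact absurd (Finset.mem_range.mpr (by simp [List.length_cons])) hmem

lemma mul_X_apply_nil (s : S) (g : A S) : (g * X s) [] = 0 := by
  simp [mul_apply, X_apply_nil]

lemma mul_X_apply_concat (s a : S) (g : A S) (t : List S) :
    (g * X s) (t ++ [a]) = g t * X s [a] := by
  rw [mul_apply, Finset.sum_eq_single t.length]
  · rw [List.take_left, List.drop_left]
  · intro i hi hne
    have hi' : i ≤ t.length + 1 := by
      have := Finset.mem_range.mp hi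
      simpa using Nat.lt_succ_iff.mp this
    have hlen : ((t ++ [a]).drop i).length = t.length + 1 - i := by simp
    have : (t ++ [a]).drop i ≠ [s] := fun hcontra => by
      rw [hcontra] at hlen; simp at hlen; omega
    rw [X_apply_ne s this, mul_zero]
  · intro hmem
    exact absurd (Finset.mem_range.mpr (by simp)) hmem

lemma one_add_X_mul_geo (s : S) : (1 + X s) * geo s = 1 := by
  funext w
  rw [add_mul, one_mul, add_apply]
  cases w with
  | nil => rw [geo_apply_nil, X_mul_apply_nil, one_apply_nil]; ring
  | cons a t =>
    rw [X_mul_apply_cons, one_apply_ne (by simp)]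
    by_cases has : a = s
    · subst has
      rw [X_apply_self, one_mul]
      by_cases ht : t = List.replicate t.length a
      · have h1 : geo a (a :: t) = (-1 : ℤ) ^ (t.length + 1) := by
          have : a :: t = List.replicate ((a :: t).length) a :=
            cons_eq_replicate_iff.mpr ⟨rfl, ht⟩
          rw [geo, if_pos this]
          simp
        have h2 : geo a t = (-1 : ℤ) ^ t.length := by
          rw [geo, if_pos ht]
        rw [h1, h2]; ring
      · rw [geo_apply_ne a (fun hcon => ht (cons_eq_replicate_iff.mp hcon).2),
          geo_apply_ne a ht]
        ring
    · rw [X_apply_ne s (by simp [has]), zero_mul, add_zero]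
      exact geo_apply_ne s fun hcon => has (cons_eq_replicate_iff.mp hcon).1

lemma geo_mul_one_add_X (s : S) : geo s * (1 + X s) = 1 := by
  funext w
  rw [mul_add, mul_one, add_apply]
  induction w using List.reverseRecOn with
  | nil => rw [geo_apply_nil, mul_X_apply_nil, one_apply_nil]; ring
  | append_singleton t a _ =>
    rw [mul_X_apply_concat, one_apply_ne (by simp)]
    by_cases has : a = s
    · subst has
      rw [X_apply_self, mul_one]
      by_cases ht : t = List.replicate t.length a
      · have h1 : geo a (t ++ [a]) = (-1 : ℤ) ^ (t.length + 1) := by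
          have : t ++ [a] = List.replicate ((t ++ [a]).length) a :=
            concat_eq_replicate_iff.mpr ⟨rfl, ht⟩
          rw [geo, if_pos this]
          simp
        have h2 : geo a t = (-1 : ℤ) ^ t.length := by
          rw [geo, if_pos ht]
        rw [h1, h2]; ring
      · rw [geo_apply_ne a (fun hcon => ht (concat_eq_replicate_iff.mp hcon).2),
          geo_apply_ne a ht]
        ring
    · rw [X_apply_ne s (by simp [has]), mul_zero, add_zero]
      exact geo_apply_ne s fun hcon => has (concat_eq_replicate_iff.mp hcon).1

/-- The Magnus unit `1 + X s`. -/
noncomputable def U (s : S) : (A S)ˣ :=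
  ⟨1 + X s, geo s, one_add_X_mul_geo s, geo_mul_one_add_X s⟩

/-- The Magnus embedding. -/
noncomputable def mu : FreeGroup S →* (A S)ˣ := FreeGroup.lift fun s => U s

lemma mu_of (s : S) : mu (FreeGroup.of s) = U s := FreeGroup.lift_apply_of

end Units
section LCS

open scoped commutatorElement

lemma commutator_mem_Gn {m n : ℕ} {u v : (A S)ˣ} (hu : u ∈ Gn S m) (hv : v ∈ Gn S n) :
    ⁅u, v⁆ ∈ Gn S (m + n) := by
  have hu' : lowOrder m ((u : A S) - 1) := hu
  have hv' : lowOrder n ((v : A S) - 1) := hv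
  suffices hmain : lowOrder (m + n) (((⁅u, v⁆ : (A S)ˣ) : A S) - 1) from hmain
  have key : ((⁅u, v⁆ : (A S)ˣ) : A S) - 1 =
      ((((u : A S) - 1) * ((v : A S) - 1) - ((v : A S) - 1) * ((u : A S) - 1)) *
        (((u⁻¹ : (A S)ˣ) : A S) * ((v⁻¹ : (A S)ˣ) : A S))) := by
    have expand : (((u : A S) - 1) * ((v : A S) - 1) - ((v : A S) - 1) * ((u : A S) - 1)) =
        (u : A S) * v - (v : A S) * u := by noncomm_ring
    rw [expand, sub_mul]
    have h1 : ((v : A S)) * u * (((u⁻¹ : (A S)ˣ) : A S) * ((v⁻¹ : (A S)ˣ) : A S)) = 1 := by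
      calc ((v : A S)) * u * (((u⁻¹ : (A S)ˣ) : A S) * ((v⁻¹ : (A S)ˣ) : A S))
          = (v : A S) * ((u : A S) * ((u⁻¹ : (A S)ˣ) : A S)) * ((v⁻¹ : (A S)ˣ) : A S) := by
            noncomm_ring
        _ = 1 := by rw [u.mul_inv]; rw [mul_one]; exact v.mul_inv
    rw [h1]
    congr 1
    show ((u * v * u⁻¹ * v⁻¹ : (A S)ˣ) : A S) = _
    push_cast
    noncomm_ring
  rw [key]
  have h2 : lowOrder (m + n) ((((u : A S) - 1) * ((v : A S) - 1) -
      ((v : A S) - 1) * ((u : A S) - 1))) :=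
    (hu'.mul hv').sub ((hv'.mul hu').mono (le_of_eq (Nat.add_comm m n)))
  exact (h2.mul (lowOrder_zero _)).mono (le_of_eq (Nat.add_zero _).symm)

lemma mu_mem_Gn_one (g : FreeGroup S) : mu g ∈ Gn S 1 := by
  have : (⊤ : Subgroup (FreeGroup S)) ≤ (Gn S 1).comap (mu (S := S)) := by
    rw [← FreeGroup.closure_range_of, Subgroup.closure_le]
    rintro x ⟨s, rfl⟩
    simp only [SetLike.mem_coe, Subgroup.mem_comap, mu_of]
    show lowOrder 1 (((U s : (A S)ˣ) : A S) - 1)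
    intro w hw
    have hw' : w = [] := by
      cases w with
      | nil => rfl
      | cons a t => simp at hw
    subst hw'
    show ((1 + X s) - 1) ([] : List S) = 0
    rw [sub_apply, add_apply, one_apply_nil, X_apply_nil]
    ring
  exact this (Subgroup.mem_top g)

lemma map_lcs_le (n : ℕ) :
    ((⊤ : Subgroup (FreeGroup S)).lowerCentralSeries n).map (mu (S := S)) ≤ Gn S n := by
  induction n with
  | zero => intro u _; exact lowOrder_zero _
  | succ n ih =>
    show ((⁅(⊤ : Subgroup (FreeGroup S)).lowerCentralSeries n, ⊤⁆ : Subgroup (FreeGroup S)).map mu) ≤ _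
    rw [Subgroup.map_commutator]
    have htop : (⊤ : Subgroup (FreeGroup S)).map mu ≤ Gn S 1 := by
      rintro u ⟨g, -, rfl⟩
      exact mu_mem_Gn_one g
    refine le_trans (Subgroup.commutator_mono ih htop) ?_
    rw [Subgroup.commutator_le]
    intro u hu v hv
    exact commutator_mem_Gn hu hv

lemma mu_eq_one_of_mem_inf {g : FreeGroup S}
    (hg : g ∈ ⨅ i : ℕ, (⊤ : Subgroup (FreeGroup S)).lowerCentralSeries i) : mu g = 1 := by
  have h : ∀ n, lowOrder n (((mu g : (A S)ˣ) : A S) - 1) := by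
    intro n
    exact map_lcs_le n ⟨g, (Subgroup.mem_iInf.mp hg) n, rfl⟩
  have : ((mu g : (A S)ˣ) : A S) - 1 = 0 := by
    funext w
    rw [zero_apply]
    exact h (w.length + 1) w (Nat.lt_succ_self _)
  ext1
  rw [Units.val_one]
  have := sub_eq_zero.mp this
  exact this

end LCS
section Inj

/-- A word in the free group is reduced: no adjacent cancelling pair. -/
def Reduced (L : List (S × Bool)) : Prop := L.Chain' fun p q => p.1 = q.1 → p.2 = q.2

lemma reduced_reduce [DecidableEq S] (L : List (S × Bool)) : Reduced (FreeGroup.reduce L) := by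
  induction L with
  | nil => exact List.isChain_nil
  | cons x L ih =>
    rw [FreeGroup.reduce.cons]
    cases h : FreeGroup.reduce L with
    | nil => exact List.isChain_singleton x
    | cons y t =>
      rw [h] at ih
      dsimp only
      by_cases hc : x.1 = y.1 ∧ x.2 = !y.2
      · rw [if_pos hc]
        exact ih.tail
      · rw [if_neg hc]
        refine List.isChain_cons_cons.mpr ⟨?_, ih⟩
        intro h1
        by_contra h2
        exact hc ⟨h1, by revert h2; cases x.2 <;> cases y.2 <;> simp⟩

/-- All nonzero coefficients of `f` are on powers of the single variable `t`. -/
def PowT (t : S) (f : A S) : Prop := ∀ w : List S, f w ≠ 0 → w = List.replicate w.length t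

lemma PowT.one (t : S) : PowT t (1 : A S) := by
  intro w hw
  cases w with
  | nil => rfl
  | cons a u => exact absurd (one_apply_ne (by simp)) hw

lemma PowT.mul {t : S} {f g : A S} (hf : PowT t f) (hg : PowT t g) : PowT t (f * g) := by
  intro w hw
  rw [mul_apply] at hw
  obtain ⟨i, hi, hne⟩ := Finset.exists_ne_zero_of_sum_ne_zero hw
  have h1 : f (w.take i) ≠ 0 := fun h => hne (by rw [h, zero_mul])
  have h2 : g (w.drop i) ≠ 0 := fun h => hne (by rw [h, mul_zero])
  have e1 := hf _ h1
  have e2 := hg _ h2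
  calc w = w.take i ++ w.drop i := (List.take_append_drop i w).symm
    _ = List.replicate ((w.take i).length) t ++ List.replicate ((w.drop i).length) t := by
        rw [← e1, ← e2]
    _ = List.replicate ((w.take i).length + (w.drop i).length) t := by
        rw [List.replicate_add]
    _ = List.replicate w.length t := by
        congr 1
        simp
        omega

lemma PowT.unit (t : S) : PowT t (((U t : (A S)ˣ) : A S)) := by
  intro w hw
  show w = _
  cases w with
  | nil => rfl
  | cons a u =>
    have : ((1 : A S) + X t) (a :: u) = X t (a :: u) := by
      rw [add_apply, one_apply_ne (by simp), zero_add]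
    by_cases h : a :: u = [t]
    · rw [h]; rfl
    · exact absurd (by rw [show ((U t : (A S)ˣ) : A S) = 1 + X t from rfl, this,
        X_apply_ne t h]) hw

lemma PowT.unit_inv (t : S) : PowT t (((U t)⁻¹ : (A S)ˣ) : A S) := by
  intro w hw
  have : (((U t)⁻¹ : (A S)ˣ) : A S) = geo t := rfl
  rw [this] at hw
  by_contra h
  exact hw (geo_apply_ne t h)

lemma coeff_nil_mul (f g : A S) : (f * g) [] = f [] * g [] := by
  rw [mul_apply]
  simp

lemma coeff_single_mul (f g : A S) (a : S) :
    (f * g) [a] = f [] * g [a] + f [a] * g [] := by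
  rw [mul_apply]
  show ∑ i ∈ Finset.range 2, _ = _
  rw [Finset.sum_range_succ, Finset.sum_range_one]
  simp

lemma pow_coeff_nil {f : A S} (hf : f [] = 1) (e : ℕ) : (f ^ e) [] = 1 := by
  induction e with
  | zero => rw [pow_zero]; exact one_apply_nil
  | succ e ih => rw [pow_succ, coeff_nil_mul, ih, hf, one_mul]

lemma pow_coeff_single {t : S} {f : A S} (hf : f [] = 1) (e : ℕ) :
    (f ^ e) [t] = e * f [t] := by
  induction e with
  | zero =>
    rw [pow_zero, one_apply_ne (by simp)]
    simp
  | succ e ih =>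
    rw [pow_succ, coeff_single_mul, pow_coeff_nil hf, ih, hf]
    push_cast
    ring

lemma PowT.pow {t : S} {f : A S} (hf : PowT t f) (e : ℕ) : PowT t (f ^ e) := by
  induction e with
  | zero => rw [pow_zero]; exact PowT.one t
  | succ e ih => rw [pow_succ]; exact ih.mul hf

/-- Key multiplication formula on words with no two adjacent equal letters,
when the left factor is a series in a single variable. -/
lemma mul_coeff_cons_chain {t : S} {F G : A S} (hF : PowT t F) (a : S) (w : List S)
    (hw : (a :: w).Chain' (· ≠ ·)) :
    (F * G) (a :: w) = F [] * G (a :: w) + F [a] * G w := by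
  rw [mul_apply]
  have hlen : (a :: w).length + 1 = w.length + 2 := by simp
  rw [hlen, Finset.sum_range_succ', Finset.sum_range_succ']
  have hzero : ∀ i ∈ Finset.range w.length,
      F ((a :: w).take (i + 1 + 1)) * G ((a :: w).drop (i + 1 + 1)) = 0 := by
    intro i hi
    have hi' : i < w.length := Finset.mem_range.mp hi
    have hlen2 : ((a :: w).take (i + 2)).length = i + 2 := by
      rw [List.length_take]; simp; omega
    by_cases hF0 : F ((a :: w).take (i + 2)) = 0
    · rw [hF0, zero_mul]
    · exfalso
      have hrep := hF _ hF0
      rw [hlen2] at hrep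
      -- (a :: w).take (i+2) = a :: w.take (i+1) = replicate (i+2) t
      have hcons : (a :: w).take (i + 2) = a :: w.take (i + 1) := by
        rfl
      rw [hcons, List.replicate_succ] at hrep
      have ha : a = t := (List.cons_eq_cons.mp hrep).1
      have hw2 : w.take (i + 1) = List.replicate (i + 1) t := (List.cons_eq_cons.mp hrep).2
      cases w with
      | nil => simp at hi'
      | cons b w' =>
        have hb : b = t := by
          have : (b :: w').take (i + 1) = b :: w'.take i := rfl
          rw [this, List.replicate_succ] at hw2
          exact (List.cons_eq_cons.mp hw2).1
        exact (List.isChain_cons_cons.mp hw).1 (ha.trans hb.symm)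
  rw [Finset.sum_congr rfl hzero]
  simp only [Finset.sum_const_zero, zero_add]
  have e1 : (a :: w).take 0 = [] := rfl
  have e2 : (a :: w).drop 0 = a :: w := rfl
  have e3 : (a :: w).take 1 = [a] := rfl
  have e4 : (a :: w).drop 1 = w := rfl
  rw [e1, e2, e3, e4]
  by_cases hFa : F [a] = 0
  · rw [hFa]
    ring
  · have := hF _ hFa
    simp only [List.length_cons, List.length_nil, List.replicate_succ, List.replicate_zero] at this
    have ha : a = t := by simpa using this
    ring

end Inj
section Main

open List

lemma destutter'_head {α : Type*} (R : α → α → Prop) [DecidableRel R] :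
    ∀ (l : List α) (a : α), ∃ m, l.destutter' R a = a :: m := by
  intro l
  induction l with
  | nil => intro a; exact ⟨[], rfl⟩
  | cons b l ih =>
    intro a
    by_cases h : R a b
    · exact ⟨l.destutter' R b, List.destutter'_cons_pos _ h⟩
    · rw [List.destutter'_cons_neg _ h]
      exact ih a

lemma destutter_replicate_append [DecidableEq S] :
    ∀ (e : ℕ), 0 < e → ∀ (t : S) (l : List S), (∀ a ∈ l.head?, a ≠ t) →
      (List.replicate e t ++ l).destutter (· ≠ ·) = t :: l.destutter (· ≠ ·) := by
  intro e
  induction e with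
  | zero => intro h; exact absurd h (by simp)
  | succ e ih =>
    intro _ t l hl
    cases e with
    | zero =>
      cases l with
      | nil => simp [List.destutter_singleton]
      | cons c l' =>
        have hc : c ≠ t := hl c rfl
        show (t :: c :: l').destutter (· ≠ ·) = _
        rw [List.destutter_cons_cons, if_pos hc.symm, List.destutter_cons']
    | succ e' =>
      have h1 : List.replicate (e' + 2) t ++ l = t :: (List.replicate (e' + 1) t ++ l) := by
        rw [List.replicate_succ]; rfl
      have h2 : List.replicate (e' + 1) t ++ l = t :: (List.replicate e' t ++ l) := by
        rw [List.replicate_succ]; rfl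
      rw [h1, h2, List.destutter_cons_cons, if_neg (by simp), ← List.destutter_cons', ← h2]
      exact ih (Nat.succ_pos _) t l hl

lemma block_decomp :
    ∀ L : List (S × Bool), Reduced L → L ≠ [] →
      ∃ (t : S) (b : Bool) (e : ℕ) (rest : List (S × Bool)), 0 < e ∧
        L = List.replicate e (t, b) ++ rest ∧ Reduced rest ∧
        (∀ p ∈ rest.head?, p.1 ≠ t) ∧ rest.length < L.length := by
  intro L
  induction L with
  | nil => intro _ h; exact absurd rfl h
  | cons x L' ih =>
    intro hred _
    rcases eq_or_ne L' [] with rfl | hL'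
    · exact ⟨x.1, x.2, 1, [], Nat.one_pos, by simp, List.isChain_nil, by simp, by simp⟩
    · have hred' : Reduced L' := hred.tail
      obtain ⟨t, b, e, rest, he, hdec, hrest, hhead, hlen⟩ := ih hred' hL'
      rcases eq_or_ne x (t, b) with rfl | hx
      · refine ⟨t, b, e + 1, rest, Nat.succ_pos _, ?_, hrest, hhead, ?_⟩
        · rw [List.replicate_succ, List.cons_append, ← hdec]
        · simp only [List.length_cons]; omega
      · have hhd : L'.head? = some (t, b) := by
          rw [hdec]
          cases e with
          | zero => exact absurd he (by simp)
          | succ e' => rw [List.replicate_succ]; rfl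
        have hxt : x.1 ≠ t := by
          intro hxt
          apply hx
          have hchain := List.isChain_cons.mp hred
          have := hchain.1 (t, b) hhd
          have hb := this hxt
          exact Prod.ext hxt hb
        refine ⟨x.1, x.2, 1, L', Nat.one_pos, by simp, hred', ?_, by simp⟩
        intro p hp
        rw [hhd] at hp
        cases hp
        exact fun h => hxt h.symm
  
lemma mk_replicate (p : S × Bool) : ∀ e : ℕ, FreeGroup.mk (List.replicate e p) = (FreeGroup.mk [p]) ^ e := by
  intro e
  induction e with
  | zero => rw [pow_zero, List.replicate_zero, ← FreeGroup.one_eq_mk]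
  | succ e ih =>
    rw [List.replicate_succ, pow_succ', ← ih, FreeGroup.mul_mk]
    rfl

lemma mk_single_false (t : S) : FreeGroup.mk [(t, false)] = (FreeGroup.of t)⁻¹ := by
  show _ = (FreeGroup.mk [(t, true)])⁻¹
  rw [FreeGroup.inv_mk]
  congr 1

lemma mu_single_powT (t : S) (b : Bool) :
    PowT t ((mu (FreeGroup.mk [(t, b)]) : (A S)ˣ) : A S) := by
  cases b
  · rw [mk_single_false, map_inv, mu_of]
    exact PowT.unit_inv t
  · rw [show FreeGroup.mk [(t, true)] = FreeGroup.of t from rfl, mu_of]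
    exact PowT.unit t

lemma mu_single_nil (t : S) (b : Bool) :
    ((mu (FreeGroup.mk [(t, b)]) : (A S)ˣ) : A S) [] = 1 := by
  cases b
  · rw [mk_single_false, map_inv, mu_of]
    exact geo_apply_nil t
  · rw [show FreeGroup.mk [(t, true)] = FreeGroup.of t from rfl, mu_of]
    show ((1 : A S) + X t) [] = 1
    rw [add_apply, one_apply_nil, X_apply_nil, add_zero]

lemma mu_single_var (t : S) (b : Bool) :
    ((mu (FreeGroup.mk [(t, b)]) : (A S)ˣ) : A S) [t] = if b then 1 else -1 := by
  cases b
  · rw [mk_single_false, map_inv, mu_of]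
    show geo t [t] = -1
    have := geo_apply_replicate t 1
    simpa using this
  · rw [show FreeGroup.mk [(t, true)] = FreeGroup.of t from rfl, mu_of]
    show ((1 : A S) + X t) [t] = 1
    rw [add_apply, one_apply_ne (by simp), X_apply_self, zero_add]

/-- The destuttered word of generators. -/
def dW [DecidableEq S] (L : List (S × Bool)) : List S := (L.map Prod.fst).destutter (· ≠ ·)

lemma main_coeff [DecidableEq S] :
    ∀ (n : ℕ) (L : List (S × Bool)), L.length < n → Reduced L →
      ((mu (FreeGroup.mk L) : (A S)ˣ) : A S) (dW L) ≠ 0 ∧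
      ∀ w : List S, w.Chain' (· ≠ ·) → (dW L).length < w.length →
        ((mu (FreeGroup.mk L) : (A S)ˣ) : A S) w = 0 := by
  intro n
  induction n with
  | zero => intro L h; exact absurd h (by simp)
  | succ n ih =>
    intro L hLn hred
    rcases eq_or_ne L [] with rfl | hLne
    · constructor
      · rw [← FreeGroup.one_eq_mk, map_one, Units.val_one]
        have hnil : dW ([] : List (S × Bool)) = [] := rfl
        rw [hnil, one_apply_nil]
        norm_num
      · intro w hw hlen
        rw [← FreeGroup.one_eq_mk, map_one, Units.val_one]
        refine one_apply_ne ?_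
        intro hwnil
        rw [hwnil] at hlen
        simp at hlen
    · obtain ⟨t, b, e, rest, he, hdec, hrest, hhead, hlen⟩ := block_decomp L hred hLne
      have hrestn : rest.length < n := by
        have : L.length ≤ n := Nat.lt_succ_iff.mp hLn
        omega
      obtain ⟨IH1, IH2⟩ := ih rest hrestn hrest
      -- decompose the image
      have hmk : FreeGroup.mk L = (FreeGroup.mk [(t, b)]) ^ e * FreeGroup.mk rest := by
        rw [hdec, ← FreeGroup.mul_mk, mk_replicate]
      set F : A S := ((mu (FreeGroup.mk [(t, b)]) : (A S)ˣ) : A S) ^ e with hFdef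
      set G : A S := ((mu (FreeGroup.mk rest) : (A S)ˣ) : A S) with hGdef
      have hval : ((mu (FreeGroup.mk L) : (A S)ˣ) : A S) = F * G := by
        rw [hmk, map_mul, map_pow, Units.val_mul, Units.val_pow_eq_pow_val]
      have hFpow : PowT t F := (mu_single_powT t b).pow e
      have hFnil : F [] = 1 := pow_coeff_nil (mu_single_nil t b) e
      have hFvar : F [t] = e * (if b then (1 : ℤ) else -1) := by
        rw [hFdef, pow_coeff_single (mu_single_nil t b), mu_single_var]
      have hFvar_ne : F [t] ≠ 0 := by
        rw [hFvar]
        cases b <;> simp <;> omega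
      -- the destuttered word
      have hmap : L.map Prod.fst = List.replicate e t ++ rest.map Prod.fst := by
        rw [hdec]; simp
      have hheadmap : ∀ a ∈ (rest.map Prod.fst).head?, a ≠ t := by
        intro a ha
        rw [List.head?_map] at ha
        obtain ⟨p, hp, rfl⟩ := Option.map_eq_some_iff.mp (Option.mem_def.mp ha)
        exact hhead p hp
      have hdW : dW L = t :: dW rest := by
        rw [dW, hmap, destutter_replicate_append e he t _ hheadmap]
        rfl
      have hch : (dW rest).Chain' (· ≠ ·) := by
        unfold dW
        apply List.isChain_destutter
      have hchain : (t :: dW rest).Chain' (· ≠ ·) := by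
        refine List.isChain_cons.mpr ⟨?_, hch⟩
        intro y hy
        cases hrw : rest with
        | nil =>
          rw [hrw] at hy
          have hnil : dW ([] : List (S × Bool)) = [] := rfl
          rw [hnil] at hy
          simp at hy
        | cons p rest' =>
          rw [hrw] at hy
          obtain ⟨m, hm⟩ := destutter'_head (· ≠ ·) (rest'.map Prod.fst) p.1
          have hdr : dW (p :: rest') = p.1 :: m := by
            unfold dW
            rw [List.map_cons, List.destutter_cons']
            exact hm
          rw [hdr] at hy
          simp at hy
          subst hy
          exact (hhead p (by rw [hrw]; rfl)).symm
      constructor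
      · rw [hval, hdW, mul_coeff_cons_chain hFpow t (dW rest) hchain]
        have hzero : G (t :: dW rest) = 0 := IH2 _ hchain (by simp)
        rw [hzero, mul_zero, zero_add]
        exact mul_ne_zero hFvar_ne IH1
      · intro w hw hwlen
        rw [hdW] at hwlen
        cases w with
        | nil => simp at hwlen
        | cons a w' =>
          rw [hval, mul_coeff_cons_chain hFpow a w' hw, hFnil, one_mul]
          have hl1 : (dW rest).length < (a :: w').length := by
            simp at hwlen ⊢; omega
          have hl2 : (dW rest).length < w'.length := by
            simp at hwlen; omega
          rw [IH2 _ hw hl1, IH2 _ (List.isChain_cons.mp hw).2 hl2]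
          ring

lemma mu_injective_at_one {g : FreeGroup S} (hg : g ≠ 1) : mu g ≠ 1 := by
  classical
  intro h1
  set L := g.toWord with hLdef
  have hred : Reduced L := by
    have := FreeGroup.reduce_toWord g
    rw [hLdef, ← this]
    exact reduced_reduce _
  have hLne : L ≠ [] := fun h => hg (FreeGroup.toWord_eq_nil_iff.mp h)
  have hmkL : FreeGroup.mk L = g := FreeGroup.mk_toWord
  obtain ⟨ha, -⟩ := main_coeff (L.length + 1) L (Nat.lt_succ_self _) hred
  rw [hmkL, h1, Units.val_one] at ha
  apply ha
  refine one_apply_ne ?_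
  rw [dW, Ne, List.destutter_eq_nil]
  simpa using hLne

end Main

end Magnus

/-- Every free group is residually nilpotent: the intersection of all terms of
its lower central series is trivial. -/
theorem stmt4 (S : Type*) :
    (⨅ i : ℕ, (⊤ : Subgroup (FreeGroup S)).lowerCentralSeries i) = ⊥ := by
  rw [eq_bot_iff]
  intro g hg
  rw [Subgroup.mem_bot]
  by_contra hne
  exact Magnus.mu_injective_at_one hne (Magnus.mu_eq_one_of_mem_inf hg)
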